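/- arXiv:1910.05301 — 2 statements merged into one kernel-verified Lean document; each statement's English description precedes it below -/
import Mathlib

section
/- If f : ℝ³ → ℝ depends only on the second coordinate, f(t,x,v) = g(x), and f is Hölder continuous with respect to the intrinsic distance d_L (i.e. there exist C, α > 0 with |f(p) − f(q)| ≤ C d_L(p,q)^α for all p,q ∈ ℝ³), then g is constant. -/
/-- The Langevin group law `(τ,ξ,η) ∗ (t,x,v) = (t+τ, x+ξ+t·η, v+η)`. -/
def langevinMul (p q : ℝ × ℝ × ℝ) : ℝ × ℝ × ℝ :=
  (q.1 + p.1, q.2.1 + p.2.1 + q.1 * p.2.2, q.2.2 + p.2.2)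

/-- The group inverse `(τ,ξ,η)⁻¹ = (−τ, −ξ+τη, −η)`. -/
def langevinInv (p : ℝ × ℝ × ℝ) : ℝ × ℝ × ℝ :=
  (-p.1, -p.2.1 + p.1 * p.2.2, -p.2.2)

/-- The homogeneous norm `|(t,x,v)|_L = |t|^{1/2} + |x|^{1/3} + |v|`. -/
noncomputable def langevinNorm (p : ℝ × ℝ × ℝ) : ℝ :=
  |p.1| ^ ((1:ℝ)/2) + |p.2.1| ^ ((1:ℝ)/3) + |p.2.2|

/-- The intrinsic distance `d_L(p,q) = |q⁻¹ ∗ p|_L`. -/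
noncomputable def langevinDist (p q : ℝ × ℝ × ℝ) : ℝ :=
  langevinNorm (langevinMul (langevinInv q) p)

/-- A function on ℝ³ depending only on the second coordinate that is Hölder
continuous with respect to the intrinsic distance `d_L` must be constant. -/
theorem intrinsic_holder_only_x_implies_constant
    (f : ℝ × ℝ × ℝ → ℝ) (g : ℝ → ℝ)
    (hfg : ∀ t x v : ℝ, f (t, x, v) = g x)
    (C α : ℝ) (hC : 0 < C) (hα : 0 < α)
    (hHolder : ∀ p q : ℝ × ℝ × ℝ, |f p - f q| ≤ C * (langevinDist p q) ^ α) :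
    ∀ x y : ℝ, g x = g y := by
  intro x y
  have key : ∀ ε : ℝ, 0 < ε → |g x - g y| ≤ C * ε ^ (α / 2) := by
    intro ε hε
    have h := hHolder (ε, x, (x - y) / ε) (0, y, (x - y) / ε)
    have hd : langevinDist (ε, x, (x - y) / ε) (0, y, (x - y) / ε) = ε ^ ((1:ℝ)/2) := by
      have hεne : ε ≠ 0 := ne_of_gt hε
      unfold langevinDist langevinMul langevinInv langevinNorm
      norm_num
      rw [show x + -y + -(ε * ((x - y) / ε)) = 0 by field_simp; ring]
      rw [abs_zero, Real.zero_rpow (by norm_num : (1:ℝ)/3 ≠ 0),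
        abs_of_pos hε]
      ring
    rw [hfg, hfg, hd] at h
    calc |g x - g y| ≤ C * (ε ^ ((1:ℝ)/2)) ^ α := h
      _ = C * ε ^ (α / 2) := by
          rw [← Real.rpow_mul hε.le]
          ring_nf
  by_contra hne
  have hd : 0 < |g x - g y| := abs_pos.mpr (sub_ne_zero.mpr hne)
  set d := |g x - g y| with hdd
  set ε : ℝ := (d / (2 * C)) ^ ((2:ℝ) / α) with hε
  have hbase : 0 < d / (2 * C) := div_pos hd (by linarith)
  have hεpos : 0 < ε := Real.rpow_pos_of_pos hbase _
  have h2 := key ε hεpos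
  have hεval : ε ^ (α / 2) = d / (2 * C) := by
    rw [hε, ← Real.rpow_mul hbase.le]
    rw [show (2:ℝ) / α * (α / 2) = 1 by field_simp]
    exact Real.rpow_one _
  rw [hεval] at h2
  have : C * (d / (2 * C)) = d / 2 := by field_simp
  rw [this] at h2
  linarith
end

section
/- Let M_t ∈ U_λ for t ∈ [0,1], i.e. 2×2 matrices with entries bounded by λ and (1,2)-entry in [λ⁻¹, λ], let E_{t,ρ} be the associated resolvent (∂_t E_{t,ρ} = M_t E_{t,ρ}, E_{ρ,ρ} = Id), and A = ∫₀¹ (E_{1,ρ} e₂)(E_{1,ρ} e₂)ᵀ dρ. If ⟨A ζ, ζ⟩ = 0 for some ζ ∈ ℝ², then ζ = 0; i.e. A is positive definite. -/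
open Matrix

open Set MeasureTheory intervalIntegral in
private lemma ode_uniq_22 {K : NNReal} {v : ℝ → (Fin 2 → Fin 2 → ℝ) → (Fin 2 → Fin 2 → ℝ)}
    (hv : ∀ t, LipschitzWith K (v t)) {f g : ℝ → Fin 2 → Fin 2 → ℝ}
    (hf : ∀ t, HasDerivAt f (v t (f t)) t) (hg : ∀ t, HasDerivAt g (v t (g t)) t)
    {t₀ : ℝ} (heq : f t₀ = g t₀) (t : ℝ) : f t = g t := by
  have ht₀ : t₀ ∈ Set.Ioo (min t₀ t - 1) (max t₀ t + 1) :=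
    ⟨by have := min_le_left t₀ t; linarith, by have := le_max_left t₀ t; linarith⟩
  have ht : t ∈ Set.Ioo (min t₀ t - 1) (max t₀ t + 1) :=
    ⟨by have := min_le_right t₀ t; linarith, by have := le_max_right t₀ t; linarith⟩
  exact ODE_solution_unique_of_mem_Ioo (s := fun _ => Set.univ)
    (fun s _ => (hv s).lipschitzOnWith) ht₀
    (fun s _ => ⟨hf s, trivial⟩) (fun s _ => ⟨hg s, trivial⟩) heq ht

private lemma resolvent_semigroup (lam : ℝ) (hlam : 0 ≤ lam)
    (M : ℝ → Matrix (Fin 2) (Fin 2) ℝ)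
    (hbdd : ∀ t : ℝ, ∀ i j : Fin 2, |M t i j| ≤ lam)
    (E : ℝ → ℝ → Matrix (Fin 2) (Fin 2) ℝ)
    (hinit : ∀ ρ : ℝ, E ρ ρ = 1)
    (hderiv : ∀ ρ t : ℝ, ∀ i j : Fin 2,
      HasDerivAt (fun τ => E τ ρ i j) ((M t * E t ρ) i j) t)
    (σ ρ t : ℝ) : E t ρ * E ρ σ = E t σ := by
  classical
  have hlip : ∀ s : ℝ, LipschitzWith (2 * lam).toNNReal
      (fun x : Fin 2 → Fin 2 → ℝ => fun i j => ∑ k, M s i k * x k j) := by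
    intro s
    apply LipschitzWith.of_dist_le_mul
    intro x y
    have hr : (0:ℝ) ≤ ((2*lam).toNNReal : ℝ) * dist x y := by positivity
    rw [dist_pi_le_iff hr]
    intro i
    rw [dist_pi_le_iff hr]
    intro j
    have hxy : ∀ k : Fin 2, |x k j - y k j| ≤ dist x y := by
      intro k
      have h1 := dist_le_pi_dist x y k
      have h2 := dist_le_pi_dist (x k) (y k) j
      rw [Real.dist_eq] at h2
      linarith
    rw [Real.dist_eq]
    have hsum : (∑ k, M s i k * x k j) - (∑ k, M s i k * y k j)
        = M s i 0 * (x 0 j - y 0 j) + M s i 1 * (x 1 j - y 1 j) := by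
      simp [Fin.sum_univ_two]; ring
    rw [hsum]
    have b0 := hbdd s i 0
    have b1 := hbdd s i 1
    have h0 := hxy 0
    have h1 := hxy 1
    have hd0 : (0:ℝ) ≤ dist x y := dist_nonneg
    have habs : |M s i 0 * (x 0 j - y 0 j) + M s i 1 * (x 1 j - y 1 j)|
        ≤ lam * dist x y + lam * dist x y := by
      calc |M s i 0 * (x 0 j - y 0 j) + M s i 1 * (x 1 j - y 1 j)|
          ≤ |M s i 0 * (x 0 j - y 0 j)| + |M s i 1 * (x 1 j - y 1 j)| := abs_add_le _ _
        _ = |M s i 0| * |x 0 j - y 0 j| + |M s i 1| * |x 1 j - y 1 j| := by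
            rw [abs_mul, abs_mul]
        _ ≤ lam * dist x y + lam * dist x y := by
            gcongr <;> first | exact abs_nonneg _ | assumption
    have hcoe : (((2*lam).toNNReal : NNReal) : ℝ) = 2 * lam :=
      Real.coe_toNNReal _ (by linarith)
    rw [hcoe]
    linarith
  have hsolC : ∀ (ρ : ℝ) (C : Matrix (Fin 2) (Fin 2) ℝ) (s : ℝ),
      HasDerivAt (fun τ => (fun i j => (E τ ρ * C) i j))
        (fun i j => ∑ k, M s i k * (E s ρ * C) k j) s := by
    intro ρ C s
    refine hasDerivAt_pi.mpr fun i => hasDerivAt_pi.mpr fun j => ?_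
    have h0 : HasDerivAt (fun τ => ∑ k, E τ ρ i k * C k j)
        (∑ k, (M s * E s ρ) i k * C k j) s :=
      HasDerivAt.fun_sum fun k _ => (hderiv ρ s i k).mul_const _
    have e1 : (fun τ => (E τ ρ * C) i j) = fun τ => ∑ k, E τ ρ i k * C k j := by
      funext τ; exact Matrix.mul_apply
    have e2 : (∑ k, M s i k * (E s ρ * C) k j) = ∑ k, (M s * E s ρ) i k * C k j := by
      rw [← Matrix.mul_apply, ← Matrix.mul_assoc, Matrix.mul_apply]
    show HasDerivAt (fun τ => (E τ ρ * C) i j) (∑ k, M s i k * (E s ρ * C) k j) s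
    rw [e1, e2]
    exact h0
  have h1 : ∀ s : ℝ, HasDerivAt (fun τ => (fun i j => (E τ ρ * E ρ σ) i j))
      (fun i j => ∑ k, M s i k * (E s ρ * E ρ σ) k j) s := hsolC ρ (E ρ σ)
  have h2 : ∀ s : ℝ, HasDerivAt (fun τ => (fun i j => E τ σ i j))
      (fun i j => ∑ k, M s i k * E s σ k j) s := by
    intro s
    have := hsolC σ 1 s
    simpa [Matrix.mul_one] using this
  have heq0 : (fun i j => (E ρ ρ * E ρ σ) i j) = (fun i j => E ρ σ i j) := by
    rw [hinit ρ, Matrix.one_mul]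
  have := ode_uniq_22 (v := fun s (x : Fin 2 → Fin 2 → ℝ) => fun i j => ∑ k, M s i k * x k j)
    hlip h1 h2 heq0 t
  exact Matrix.ext fun i j => congrFun (congrFun this i) j

/-- Nondegeneracy of the Kolmogorov-type Gramian: if `M_t` has entries bounded
by `λ` and `(1,2)`-entry in `[λ⁻¹, λ]`, `E_{t,ρ}` is the associated resolvent
and `A = ∫₀¹ (E_{1,ρ}e₂)(E_{1,ρ}e₂)ᵀ dρ`, then `⟨Aζ,ζ⟩ = 0` forces `ζ = 0`. -/
theorem gramian_posDef
    (lam : ℝ) (hlam : 0 < lam)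
    (M : ℝ → Matrix (Fin 2) (Fin 2) ℝ)
    (hbdd : ∀ t : ℝ, ∀ i j : Fin 2, |M t i j| ≤ lam)
    (h12 : ∀ t : ℝ, lam⁻¹ ≤ M t 0 1 ∧ M t 0 1 ≤ lam)
    (E : ℝ → ℝ → Matrix (Fin 2) (Fin 2) ℝ)
    (hinit : ∀ ρ : ℝ, E ρ ρ = 1)
    (hderiv : ∀ ρ t : ℝ, ∀ i j : Fin 2,
      HasDerivAt (fun τ => E τ ρ i j) ((M t * E t ρ) i j) t)
    (A : Matrix (Fin 2) (Fin 2) ℝ)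
    (hA : ∀ i j : Fin 2,
      A i j = ∫ ρ in (0:ℝ)..1,
        ((E 1 ρ).mulVec ![0, 1] i) * ((E 1 ρ).mulVec ![0, 1] j)) :
    ∀ ζ : Fin 2 → ℝ, (A.mulVec ζ) ⬝ᵥ ζ = 0 → ζ = 0 := by
  intro ζ hzero
  have hsemi := resolvent_semigroup lam hlam.le M hbdd E hinit hderiv
  -- entrywise derivatives of s ↦ E s 0
  have hd' : ∀ (ρ : ℝ) (i j : Fin 2), HasDerivAt (fun s => E s 0 i j)
      (M ρ i 0 * E ρ 0 0 j + M ρ i 1 * E ρ 0 1 j) ρ := by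
    intro ρ i j
    have := hderiv 0 ρ i j
    simpa [Matrix.mul_apply, Fin.sum_univ_two] using this
  -- products E ρ 0 * E 0 ρ = 1
  have hprod : ∀ ρ : ℝ, E ρ 0 * E 0 ρ = 1 := by
    intro ρ
    have := hsemi ρ 0 ρ
    rwa [hinit ρ] at this
  have hmulE : ∀ (ρ : ℝ) (i j : Fin 2),
      E ρ 0 i 0 * E 0 ρ 0 j + E ρ 0 i 1 * E 0 ρ 1 j
        = if i = j then (1:ℝ) else 0 := by
    intro ρ i j
    have := congrArg (fun X : Matrix (Fin 2) (Fin 2) ℝ => X i j) (hprod ρ)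
    simpa [Matrix.mul_apply, Fin.sum_univ_two, Matrix.one_apply] using this
  have eq1 : ∀ ρ : ℝ, E ρ 0 0 0 * E 0 ρ 0 0 + E ρ 0 0 1 * E 0 ρ 1 0 = 1 := fun ρ => by
    simpa using hmulE ρ 0 0
  have eq2 : ∀ ρ : ℝ, E ρ 0 0 0 * E 0 ρ 0 1 + E ρ 0 0 1 * E 0 ρ 1 1 = 0 := fun ρ => by
    simpa using hmulE ρ 0 1
  have eq3 : ∀ ρ : ℝ, E ρ 0 1 0 * E 0 ρ 0 0 + E ρ 0 1 1 * E 0 ρ 1 0 = 0 := fun ρ => by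
    simpa using hmulE ρ 1 0
  have eq4 : ∀ ρ : ℝ, E ρ 0 1 0 * E 0 ρ 0 1 + E ρ 0 1 1 * E 0 ρ 1 1 = 1 := fun ρ => by
    simpa using hmulE ρ 1 1
  -- the determinant of E ρ 0 never vanishes
  have hDne : ∀ ρ : ℝ, E ρ 0 0 0 * E ρ 0 1 1 - E ρ 0 0 1 * E ρ 0 1 0 ≠ 0 := by
    intro ρ
    have hd := congrArg Matrix.det (hprod ρ)
    rw [Matrix.det_mul, Matrix.det_one] at hd
    have hne := left_ne_zero_of_mul_eq_one hd
    rwa [Matrix.det_fin_two] at hne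
  -- product identities for entries of E 0 ρ
  have hxP : ∀ ρ : ℝ, E 0 ρ 0 0 * (E ρ 0 0 0 * E ρ 0 1 1 - E ρ 0 0 1 * E ρ 0 1 0)
      = E ρ 0 1 1 := fun ρ => by
    linear_combination E ρ 0 1 1 * eq1 ρ - E ρ 0 0 1 * eq3 ρ
  have hyP : ∀ ρ : ℝ, E 0 ρ 0 1 * (E ρ 0 0 0 * E ρ 0 1 1 - E ρ 0 0 1 * E ρ 0 1 0)
      = -(E ρ 0 0 1) := fun ρ => by
    linear_combination E ρ 0 1 1 * eq2 ρ - E ρ 0 0 1 * eq4 ρ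
  have hzP : ∀ ρ : ℝ, E 0 ρ 1 0 * (E ρ 0 0 0 * E ρ 0 1 1 - E ρ 0 0 1 * E ρ 0 1 0)
      = -(E ρ 0 1 0) := fun ρ => by
    linear_combination E ρ 0 0 0 * eq3 ρ - E ρ 0 1 0 * eq1 ρ
  have hwP : ∀ ρ : ℝ, E 0 ρ 1 1 * (E ρ 0 0 0 * E ρ 0 1 1 - E ρ 0 0 1 * E ρ 0 1 0)
      = E ρ 0 0 0 := fun ρ => by
    linear_combination E ρ 0 0 0 * eq4 ρ - E ρ 0 1 0 * eq2 ρ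
  -- division forms
  have hx' : ∀ ρ : ℝ, E 0 ρ 0 0
      = E ρ 0 1 1 / (E ρ 0 0 0 * E ρ 0 1 1 - E ρ 0 0 1 * E ρ 0 1 0) := fun ρ => by
    rw [eq_div_iff (hDne ρ)]; exact hxP ρ
  have hy' : ∀ ρ : ℝ, E 0 ρ 0 1
      = -(E ρ 0 0 1) / (E ρ 0 0 0 * E ρ 0 1 1 - E ρ 0 0 1 * E ρ 0 1 0) := fun ρ => by
    rw [eq_div_iff (hDne ρ)]; exact hyP ρ
  have hz' : ∀ ρ : ℝ, E 0 ρ 1 0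
      = -(E ρ 0 1 0) / (E ρ 0 0 0 * E ρ 0 1 1 - E ρ 0 0 1 * E ρ 0 1 0) := fun ρ => by
    rw [eq_div_iff (hDne ρ)]; exact hzP ρ
  have hw' : ∀ ρ : ℝ, E 0 ρ 1 1
      = E ρ 0 0 0 / (E ρ 0 0 0 * E ρ 0 1 1 - E ρ 0 0 1 * E ρ 0 1 0) := fun ρ => by
    rw [eq_div_iff (hDne ρ)]; exact hwP ρ
  -- continuity
  have hcB : ∀ (i j : Fin 2), Continuous fun s => E s 0 i j :=
    fun i j => continuous_iff_continuousAt.mpr fun ρ => (hd' ρ i j).continuousAt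
  have hcD : Continuous fun s => E s 0 0 0 * E s 0 1 1 - E s 0 0 1 * E s 0 1 0 :=
    ((hcB 0 0).mul (hcB 1 1)).sub ((hcB 0 1).mul (hcB 1 0))
  have hcx : Continuous fun s => E 0 s 0 0 := by
    have h : (fun s => E 0 s 0 0) = fun s => E s 0 1 1
        / (E s 0 0 0 * E s 0 1 1 - E s 0 0 1 * E s 0 1 0) := funext fun s => hx' s
    rw [h]; exact (hcB 1 1).div hcD hDne
  have hcy : Continuous fun s => E 0 s 0 1 := by
    have h : (fun s => E 0 s 0 1) = fun s => -(E s 0 0 1)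
        / (E s 0 0 0 * E s 0 1 1 - E s 0 0 1 * E s 0 1 0) := funext fun s => hy' s
    rw [h]; exact (hcB 0 1).neg.div hcD hDne
  have hcz : Continuous fun s => E 0 s 1 0 := by
    have h : (fun s => E 0 s 1 0) = fun s => -(E s 0 1 0)
        / (E s 0 0 0 * E s 0 1 1 - E s 0 0 1 * E s 0 1 0) := funext fun s => hz' s
    rw [h]; exact (hcB 1 0).neg.div hcD hDne
  have hcw : Continuous fun s => E 0 s 1 1 := by
    have h : (fun s => E 0 s 1 1) = fun s => E s 0 0 0
        / (E s 0 0 0 * E s 0 1 1 - E s 0 0 1 * E s 0 1 0) := funext fun s => hw' s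
    rw [h]; exact (hcB 0 0).div hcD hDne
  -- semigroup at 1
  have hsemi10 : ∀ ρ : ℝ, E 1 0 * E 0 ρ = E 1 ρ := fun ρ => hsemi ρ 0 1
  set p : ℝ := ζ 0 * E 1 0 0 0 + ζ 1 * E 1 0 1 0 with hp_def
  set q : ℝ := ζ 0 * E 1 0 0 1 + ζ 1 * E 1 0 1 1 with hq_def
  -- matching the integrand
  have φm : ∀ ρ : ℝ, E 1 ρ 0 1 * ζ 0 + E 1 ρ 1 1 * ζ 1
      = p * E 0 ρ 0 1 + q * E 0 ρ 1 1 := by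
    intro ρ
    rw [← hsemi10 ρ, hp_def, hq_def]
    simp only [Matrix.mul_apply, Fin.sum_univ_two]
    ring
  -- continuity of the integrand pieces
  have hcE : ∀ i : Fin 2, Continuous fun ρ => E 1 ρ i 1 := by
    intro i
    have h : (fun ρ => E 1 ρ i 1)
        = fun ρ => E 1 0 i 0 * E 0 ρ 0 1 + E 1 0 i 1 * E 0 ρ 1 1 := by
      funext ρ
      rw [← hsemi10 ρ]
      simp only [Matrix.mul_apply, Fin.sum_univ_two]
    rw [h]
    exact (continuous_const.mul hcy).add (continuous_const.mul hcw)
  have hprod_int : ∀ i j : Fin 2, IntervalIntegrable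
      (fun ρ => E 1 ρ i 1 * E 1 ρ j 1) MeasureTheory.volume 0 1 :=
    fun i j => ((hcE i).mul (hcE j)).intervalIntegrable 0 1
  have hA' : ∀ i j : Fin 2, A i j = ∫ ρ in (0:ℝ)..1, E 1 ρ i 1 * E 1 ρ j 1 := by
    intro i j
    rw [hA i j]
    apply intervalIntegral.integral_congr
    intro ρ _
    simp [Matrix.mulVec, dotProduct, Fin.sum_univ_two, Matrix.vecHead, Matrix.vecTail]
  have hAz : (A.mulVec ζ) ⬝ᵥ ζ
      = ∫ ρ in (0:ℝ)..1, (E 1 ρ 0 1 * ζ 0 + E 1 ρ 1 1 * ζ 1)^2 := by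
    have e : (A.mulVec ζ) ⬝ᵥ ζ = (ζ 0 * ζ 0 * A 0 0 + ζ 1 * ζ 0 * A 0 1)
        + (ζ 0 * ζ 1 * A 1 0 + ζ 1 * ζ 1 * A 1 1) := by
      simp only [Matrix.mulVec, dotProduct, Fin.sum_univ_two]
      ring
    rw [e, hA' 0 0, hA' 0 1, hA' 1 0, hA' 1 1,
      ← intervalIntegral.integral_const_mul, ← intervalIntegral.integral_const_mul,
      ← intervalIntegral.integral_const_mul, ← intervalIntegral.integral_const_mul,
      ← intervalIntegral.integral_add ((hprod_int 0 0).const_mul _) ((hprod_int 0 1).const_mul _),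
      ← intervalIntegral.integral_add ((hprod_int 1 0).const_mul _) ((hprod_int 1 1).const_mul _),
      ← intervalIntegral.integral_add
        (((hprod_int 0 0).const_mul _).add ((hprod_int 0 1).const_mul _))
        (((hprod_int 1 0).const_mul _).add ((hprod_int 1 1).const_mul _))]
    apply intervalIntegral.integral_congr
    intro ρ _
    ring
  -- the integral of Φ² vanishes
  have hcΦ : Continuous fun ρ => p * E 0 ρ 0 1 + q * E 0 ρ 1 1 :=
    (continuous_const.mul hcy).add (continuous_const.mul hcw)
  have hkey : ∫ ρ in (0:ℝ)..1, (p * E 0 ρ 0 1 + q * E 0 ρ 1 1)^2 = 0 := by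
    have hcg : (∫ ρ in (0:ℝ)..1, (p * E 0 ρ 0 1 + q * E 0 ρ 1 1)^2)
        = ∫ ρ in (0:ℝ)..1, (E 1 ρ 0 1 * ζ 0 + E 1 ρ 1 1 * ζ 1)^2 := by
      apply intervalIntegral.integral_congr
      intro ρ _
      show (p * E 0 ρ 0 1 + q * E 0 ρ 1 1)^2 = (E 1 ρ 0 1 * ζ 0 + E 1 ρ 1 1 * ζ 1)^2
      rw [φm ρ]
    rw [hcg, ← hAz]
    exact hzero
  -- Φ vanishes on (0,1]
  have hΦ0 : ∀ ρ ∈ Set.Ioc (0:ℝ) 1, p * E 0 ρ 0 1 + q * E 0 ρ 1 1 = 0 := by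
    have hInt : MeasureTheory.IntegrableOn
        (fun ρ => (p * E 0 ρ 0 1 + q * E 0 ρ 1 1)^2) (Set.Ioc (0:ℝ) 1)
        MeasureTheory.volume := ((hcΦ.pow 2).intervalIntegrable 0 1).1
    have hkey' : ∫ ρ in Set.Ioc (0:ℝ) 1, (p * E 0 ρ 0 1 + q * E 0 ρ 1 1)^2 = 0 := by
      rw [← intervalIntegral.integral_of_le (by norm_num : (0:ℝ) ≤ 1)]
      exact hkey
    have hae := (MeasureTheory.setIntegral_eq_zero_iff_of_nonneg_ae
      (Filter.Eventually.of_forall fun x => sq_nonneg _) hInt).mp hkey'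
    have heqon := MeasureTheory.Measure.eqOn_Ioc_of_ae_eq MeasureTheory.volume hae
      (hcΦ.pow 2).continuousOn continuousOn_const
    intro ρ hρ
    have h2 : (p * E 0 ρ 0 1 + q * E 0 ρ 1 1)^2 = 0 := by simpa using heqon hρ
    exact (pow_eq_zero_iff two_ne_zero).mp h2
  -- Liouville: derivative of the determinant
  have hD : ∀ ρ : ℝ, HasDerivAt (fun s => E s 0 0 0 * E s 0 1 1 - E s 0 0 1 * E s 0 1 0)
      ((M ρ 0 0 + M ρ 1 1) * (E ρ 0 0 0 * E ρ 0 1 1 - E ρ 0 0 1 * E ρ 0 1 0)) ρ := by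
    intro ρ
    have h : HasDerivAt (fun s => E s 0 0 0 * E s 0 1 1 - E s 0 0 1 * E s 0 1 0) _ ρ :=
      ((hd' ρ 0 0).mul (hd' ρ 1 1)).sub ((hd' ρ 0 1).mul (hd' ρ 1 0))
    convert h using 1
    ring
  -- derivative of Φ
  have hfunΦ : (fun s => (p * -(E s 0 0 1) + q * E s 0 0 0)
      / (E s 0 0 0 * E s 0 1 1 - E s 0 0 1 * E s 0 1 0))
      = fun s => p * E 0 s 0 1 + q * E 0 s 1 1 := by
    funext s
    rw [hy' s, hw' s]
    have hne := hDne s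
    field_simp
  have hΦ' : ∀ ρ : ℝ, HasDerivAt (fun s => p * E 0 s 0 1 + q * E 0 s 1 1)
      (-(M ρ 0 1) * (p * E 0 ρ 0 0 + q * E 0 ρ 1 0)
        - M ρ 1 1 * (p * E 0 ρ 0 1 + q * E 0 ρ 1 1)) ρ := by
    intro ρ
    have hNum : HasDerivAt (fun s => p * -(E s 0 0 1) + q * E s 0 0 0)
        (p * -(M ρ 0 0 * E ρ 0 0 1 + M ρ 0 1 * E ρ 0 1 1)
          + q * (M ρ 0 0 * E ρ 0 0 0 + M ρ 0 1 * E ρ 0 1 0)) ρ :=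
      (((hd' ρ 0 1).neg).const_mul p).add ((hd' ρ 0 0).const_mul q)
    have h : HasDerivAt (fun s => (p * -(E s 0 0 1) + q * E s 0 0 0)
        / (E s 0 0 0 * E s 0 1 1 - E s 0 0 1 * E s 0 1 0)) _ ρ := hNum.div (hD ρ) (hDne ρ)
    rw [hfunΦ] at h
    convert h using 1
    rw [hx' ρ, hz' ρ, hy' ρ, hw' ρ]
    have hne := hDne ρ
    field_simp
    ring
  -- derivative of Φ at 1/2 is zero
  have hmem : Set.Ioo (0:ℝ) 1 ∈ nhds (1/2 : ℝ) :=
    Ioo_mem_nhds (by norm_num) (by norm_num)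
  have hev : (fun s => p * E 0 s 0 1 + q * E 0 s 1 1) =ᶠ[nhds (1/2:ℝ)] fun _ => (0:ℝ) := by
    filter_upwards [hmem] with s hs
    exact hΦ0 s (Set.Ioo_subset_Ioc_self hs)
  have h0d : HasDerivAt (fun s => p * E 0 s 0 1 + q * E 0 s 1 1) 0 (1/2 : ℝ) :=
    (hasDerivAt_const (1/2:ℝ) (0:ℝ)).congr_of_eventuallyEq hev
  have huniq := (hΦ' (1/2)).unique h0d
  have hΦhalf : p * E 0 (1/2) 0 1 + q * E 0 (1/2) 1 1 = 0 :=
    hΦ0 (1/2) ⟨by norm_num, by norm_num⟩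
  have hm01pos : 0 < M (1/2) 0 1 := lt_of_lt_of_le (inv_pos.mpr hlam) (h12 (1/2)).1
  have hΨhalf : p * E 0 (1/2) 0 0 + q * E 0 (1/2) 1 0 = 0 := by
    have h2 : M (1/2) 0 1 * (p * E 0 (1/2) 0 0 + q * E 0 (1/2) 1 0) = 0 := by
      linear_combination -huniq - M (1/2) 1 1 * hΦhalf
    exact (mul_eq_zero.mp h2).resolve_left hm01pos.ne'
  -- conclude p = q = 0
  have h3 : q * E (1/2) 0 0 0 - p * E (1/2) 0 0 1 = 0 := by
    linear_combination (E (1/2) 0 0 0 * E (1/2) 0 1 1 - E (1/2) 0 0 1 * E (1/2) 0 1 0) * hΦhalf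
      - p * hyP (1/2) - q * hwP (1/2)
  have h4 : p * E (1/2) 0 1 1 - q * E (1/2) 0 1 0 = 0 := by
    linear_combination (E (1/2) 0 0 0 * E (1/2) 0 1 1 - E (1/2) 0 0 1 * E (1/2) 0 1 0) * hΨhalf
      - p * hxP (1/2) - q * hzP (1/2)
  have hp0 : p = 0 := by
    have h5 : p * (E (1/2) 0 0 0 * E (1/2) 0 1 1 - E (1/2) 0 0 1 * E (1/2) 0 1 0) = 0 := by
      linear_combination E (1/2) 0 0 0 * h4 + E (1/2) 0 1 0 * h3
    exact (mul_eq_zero.mp h5).resolve_right (hDne (1/2))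
  have hq0 : q = 0 := by
    have h5 : q * (E (1/2) 0 0 0 * E (1/2) 0 1 1 - E (1/2) 0 0 1 * E (1/2) 0 1 0) = 0 := by
      linear_combination E (1/2) 0 1 1 * h3 + E (1/2) 0 0 1 * h4
    exact (mul_eq_zero.mp h5).resolve_right (hDne (1/2))
  -- conclude ζ = 0
  rw [hp_def] at hp0
  rw [hq_def] at hq0
  have hDone := hDne 1
  have hζ0 : ζ 0 * (E 1 0 0 0 * E 1 0 1 1 - E 1 0 0 1 * E 1 0 1 0) = 0 := by
    linear_combination E 1 0 1 1 * hp0 - E 1 0 1 0 * hq0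
  have hζ1 : ζ 1 * (E 1 0 0 0 * E 1 0 1 1 - E 1 0 0 1 * E 1 0 1 0) = 0 := by
    linear_combination E 1 0 0 0 * hq0 - E 1 0 0 1 * hp0
  funext i
  fin_cases i
  · exact (mul_eq_zero.mp hζ0).resolve_right hDone
  · exact (mul_eq_zero.mp hζ1).resolve_right hDone
end
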